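/- If W is positive definite, then the top-left entry of the inverse does not decrease when the extra row and column are appended: (W⁻¹)₀₀ ≥ (V⁻¹)₀₀, where (M⁻¹)₀₀ denotes the (0,0) entry of M⁻¹. -/

import Mathlib

open Matrix

/-- The `(n+2) × (n+2)` symmetric block matrix `W = [[V, ψ], [ψᵀ, α]]`. -/
def blockW (n : ℕ) (V : Matrix (Fin (n+1)) (Fin (n+1)) ℝ)
    (ψ : Fin (n+1) → ℝ) (α : ℝ) :
    Matrix (Fin (n+1) ⊕ Fin 1) (Fin (n+1) ⊕ Fin 1) ℝ :=
  Matrix.fromBlocks V (Matrix.of fun i _ => ψ i) (Matrix.of fun _ j => ψ j)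
    (Matrix.of fun _ _ => α)

/-- If `W = [[V, ψ], [ψᵀ, α]]` is positive definite, then the `(0,0)` entry of
the inverse does not decrease when the extra row and column are appended:
`(W⁻¹)₀₀ ≥ (V⁻¹)₀₀`. -/
theorem stmt4 (n : ℕ) (V : Matrix (Fin (n+1)) (Fin (n+1)) ℝ)
    (ψ : Fin (n+1) → ℝ) (α : ℝ)
    (hV : V.PosDef) (hW : (blockW n V ψ α).PosDef) :
    (blockW n V ψ α)⁻¹ (Sum.inl 0) (Sum.inl 0) ≥ V⁻¹ 0 0 := by
  set B : Matrix (Fin (n+1)) (Fin 1) ℝ := Matrix.of fun i _ => ψ i with hB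
  set C : Matrix (Fin 1) (Fin (n+1)) ℝ := Matrix.of fun _ j => ψ j with hC
  set D : Matrix (Fin 1) (Fin 1) ℝ := Matrix.of fun _ _ => α with hD
  have hCB : C = Bᴴ := by ext i j; simp [hB, hC]
  have hWblk : blockW n V ψ α = fromBlocks V B C D := rfl
  letI : Invertible V := (V.invertibleOfIsUnitDet (isUnit_iff_ne_zero.mpr hV.det_pos.ne'))
  letI : Invertible (blockW n V ψ α) := ((blockW n V ψ α).invertibleOfIsUnitDet (isUnit_iff_ne_zero.mpr hW.det_pos.ne'))
  letI iW : Invertible (fromBlocks V B C D) := by rw [← hWblk]; infer_instance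
  letI iS : Invertible (D - C * ⅟V * B) := invertibleOfFromBlocks₁₁Invertible V B C D
  -- Schur complement is PosSemidef
  have hS : (D - C * V⁻¹ * B).PosSemidef := by
    rw [hCB, ← PosDef.fromBlocks₁₁ B D hV, ← hCB, ← hWblk]
    exact hW.posSemidef
  have hSeq : (D - C * ⅟V * B) = D - C * V⁻¹ * B := by rw [invOf_eq_nonsing_inv]
  set S := D - C * ⅟V * B with hSdef
  have hs0 : 0 ≤ S 0 0 := by
    rw [hSeq]
    exact hS.diag_nonneg
  -- ⅟S entry
  have hmul : (S * ⅟S) 0 0 = 1 := by rw [mul_invOf_self]; simp [Matrix.one_apply]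
  have hmul' : S 0 0 * ⅟S 0 0 = 1 := by
    rw [← hmul, Matrix.mul_apply]; simp
  have hxpos : 0 < ⅟S 0 0 := by
    rcases lt_or_eq_of_le hs0 with h | h
    · nlinarith
    · exfalso; rw [← h] at hmul'; simp at hmul'
  -- the inverse formula
  have hWinv : (blockW n V ψ α)⁻¹ =
      fromBlocks (⅟V + ⅟V * B * ⅟S * C * ⅟V) (-(⅟V * B * ⅟S))
        (-(⅟S * C * ⅟V)) (⅟S) := by
    rw [hWblk, ← invOf_eq_nonsing_inv, invOf_fromBlocks₁₁_eq]
  rw [hWinv]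
  simp only [fromBlocks_apply₁₁, Matrix.add_apply]
  -- symmetry of V⁻¹
  have hVsymm : (V⁻¹).IsHermitian := hV.1.inv
  have ha : (V⁻¹ * B * ⅟S * C * V⁻¹) 0 0 =
      (⅟S 0 0) * ((V⁻¹ *ᵥ ψ) 0) ^ 2 := by
    have h1 : (V⁻¹ * B) 0 0 = (V⁻¹ *ᵥ ψ) 0 := by
      rw [Matrix.mul_apply, Matrix.mulVec]; simp [hB, dotProduct]
    have h2 : (C * V⁻¹) 0 0 = (V⁻¹ *ᵥ ψ) 0 := by
      rw [Matrix.mul_apply, Matrix.mulVec]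
      simp only [hC, Matrix.of_apply, dotProduct]
      congr 1; ext i
      rw [← hVsymm.apply i 0]
      simp [mul_comm]
    have : (V⁻¹ * B * ⅟S * C * V⁻¹) 0 0 = (V⁻¹ * B) 0 0 * ⅟S 0 0 * (C * V⁻¹) 0 0 := by
      rw [show V⁻¹ * B * ⅟S * C * V⁻¹ = V⁻¹ * B * ⅟S * (C * V⁻¹) by rw [Matrix.mul_assoc]]
      rw [Matrix.mul_apply]
      simp [Matrix.mul_apply]
    rw [this, h1, h2]; ring
  rw [invOf_eq_nonsing_inv, ha]
  have := sq_nonneg ((V⁻¹ *ᵥ ψ) 0)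
  nlinarith
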